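/- Constant step-size SGD neighborhood via optimal objective difference: if f_i are convex and L_i-smooth, f is μ-strongly convex with minimizer x*, and x^{k+1} = x^k − γ∇f_i(x^k) with γ ≤ 1/L_max, then E‖x^k − x*‖² ≤ (1 − μγ)^k ‖x^0 − x*‖² + 2σ²/μ, where σ² = f(x*) − E_i[f_i*]. -/

import Mathlib

set_option maxHeartbeats 1000000


open scoped RealInnerProductSpace

lemma sgd_descent {E : Type*} [NormedAddCommGroup E] [InnerProductSpace ℝ E] [CompleteSpace E]
    (f : E → ℝ) (G : E → E) (hgrad : ∀ x, HasGradientAt f (G x) x)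
    (L : ℝ) (hsmooth : ∀ x y, ‖G x - G y‖ ≤ L * ‖x - y‖)
    (x y : E) : f y ≤ f x + ⟪G x, y - x⟫ + L / 2 * ‖y - x‖ ^ 2 := by
  set v := y - x with hv
  set ψ : ℝ → ℝ := fun t => f (x + t • v) - t * ⟪G x, v⟫ - L * ‖v‖ ^ 2 * t ^ 2 / 2 with hψ
  have hc : ∀ t : ℝ, HasDerivAt (fun t : ℝ => x + t • v) v t := fun t => by
    simpa using ((hasDerivAt_id t).smul_const v).const_add x
  have hd : ∀ t : ℝ, HasDerivAt ψ (⟪G (x + t • v), v⟫ - ⟪G x, v⟫ - L * ‖v‖ ^ 2 * t) t := by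
    intro t
    have h1 : HasDerivAt (fun t : ℝ => f (x + t • v)) (⟪G (x + t • v), v⟫) t := by
      have := ((hgrad (x + t • v)).hasFDerivAt).comp_hasDerivAt t (hc t)
      simp [InnerProductSpace.toDual_apply_apply] at this
      exact this
    have h2 : HasDerivAt (fun t : ℝ => t * ⟪G x, v⟫) (⟪G x, v⟫) t := by
      simpa using (hasDerivAt_id t).mul_const _
    have h3 : HasDerivAt (fun t : ℝ => L * ‖v‖ ^ 2 * t ^ 2 / 2) (L * ‖v‖ ^ 2 * t) t := by
      have := ((hasDerivAt_pow 2 t).const_mul (L * ‖v‖ ^ 2)).div_const 2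
      refine this.congr_deriv ?_
      ring
    exact (h1.sub h2).sub h3
  have hanti : AntitoneOn ψ (Set.Icc 0 1) := by
    apply antitoneOn_of_deriv_nonpos (convex_Icc 0 1)
    · exact fun t _ => (hd t).continuousAt.continuousWithinAt
    · exact fun t _ => ((hd t).differentiableAt).differentiableWithinAt
    · intro t ht
      rw [(hd t).deriv]
      rw [interior_Icc] at ht
      have hb : ⟪G (x + t • v) - G x, v⟫ ≤ L * ‖v‖ ^ 2 * t := by
        calc ⟪G (x + t • v) - G x, v⟫ ≤ ‖G (x + t • v) - G x‖ * ‖v‖ := real_inner_le_norm _ _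
        _ ≤ L * ‖x + t • v - x‖ * ‖v‖ := by
            have := hsmooth (x + t • v) x
            nlinarith [norm_nonneg v]
        _ = L * ‖v‖ ^ 2 * t := by
            rw [add_sub_cancel_left, norm_smul, Real.norm_eq_abs, abs_of_pos ht.1]
            ring
      have := inner_sub_left (𝕜 := ℝ) (G (x + t • v)) (G x) v
      linarith [hb, this.symm.le, this.le]
  have h10 := hanti (Set.mem_Icc.2 ⟨le_refl 0, zero_le_one⟩)
    (Set.mem_Icc.2 ⟨zero_le_one, le_refl 1⟩) zero_le_one
  have hxy : x + (1:ℝ) • v = y := by rw [one_smul, hv]; abel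
  simp only [hψ, hxy, zero_smul, add_zero, one_pow, zero_pow, mul_zero, zero_mul,
    sub_zero] at h10
  nlinarith [h10]

lemma sgd_gradsq {E : Type*} [NormedAddCommGroup E] [InnerProductSpace ℝ E] [CompleteSpace E]
    (f : E → ℝ) (G : E → E)
    (L : ℝ) (hL : 0 < L)
    (hdesc : ∀ x y, f y ≤ f x + ⟪G x, y - x⟫ + L / 2 * ‖y - x‖ ^ 2)
    (fs : ℝ) (hfs : ∀ z, fs ≤ f z) (x : E) :
    ‖G x‖ ^ 2 ≤ 2 * L * (f x - fs) := by
  have h := hdesc x (x - (1 / L) • G x)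
  have h2 : x - (1 / L) • G x - x = -((1/L) • G x) := by abel
  rw [h2] at h
  have h3 : ⟪G x, -((1/L) • G x)⟫ = -(1/L) * ‖G x‖ ^ 2 := by
    rw [inner_neg_right, real_inner_smul_right, real_inner_self_eq_norm_sq]; ring
  have h4 : ‖-((1/L) • G x)‖ ^ 2 = (1/L)^2 * ‖G x‖ ^ 2 := by
    rw [norm_neg, norm_smul, Real.norm_eq_abs]
    rw [abs_of_pos (by positivity : (0:ℝ) < 1/L)]; ring
  rw [h3, h4] at h
  have h5 := hfs (x - (1 / L) • G x)
  have hL' : L ≠ 0 := ne_of_gt hL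
  have h7 : fs ≤ f x - 1/(2*L) * ‖G x‖ ^ 2 := by
    have heq : f x + -(1 / L) * ‖G x‖ ^ 2 + L / 2 * ((1 / L) ^ 2 * ‖G x‖ ^ 2)
        = f x - 1/(2*L) * ‖G x‖ ^ 2 := by field_simp; ring
    linarith [heq ▸ (h5.trans h)]
  have h6 : 1/(2*L) * ‖G x‖^2 ≤ f x - fs := by linarith
  calc ‖G x‖ ^ 2 = 2 * L * (1/(2*L) * ‖G x‖^2) := by field_simp
  _ ≤ 2 * L * (f x - fs) := by nlinarith

/-- Constant step-size SGD for strongly convex `f` with convex smooth `f_i`: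
for `γ ≤ 1/L_max`, `E‖x^k − x*‖² ≤ (1 − μγ)^k ‖x^0 − x*‖² + 2σ²/μ`, where
`σ² = f(x*) − E_i[f_i*]` and expectation is over the i.i.d. uniform indices. -/
theorem stmt7 {d n : ℕ} (hn : 0 < n)
    (f : Fin n → EuclideanSpace ℝ (Fin d) → ℝ)
    (G : Fin n → EuclideanSpace ℝ (Fin d) → EuclideanSpace ℝ (Fin d))
    (hgrad : ∀ i x, HasGradientAt (f i) (G i x) x)
    (hconv : ∀ i x y, f i y ≥ f i x + ⟪G i x, y - x⟫)
    (L : Fin n → ℝ) (hL : ∀ i, 0 < L i)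
    (hsmooth : ∀ i x y, ‖G i x - G i y‖ ≤ L i * ‖x - y‖)
    (fstar : Fin n → ℝ) (hfstar : ∀ i, IsGLB (Set.range (f i)) (fstar i))
    (F : EuclideanSpace ℝ (Fin d) → ℝ) (hF : ∀ x, F x = (1 / (n : ℝ)) * ∑ i, f i x)
    (GF : EuclideanSpace ℝ (Fin d) → EuclideanSpace ℝ (Fin d))
    (hGF : ∀ x, HasGradientAt F (GF x) x)
    (μ : ℝ) (hμ : 0 < μ)
    (hsc : ∀ x y, F y ≥ F x + ⟪GF x, y - x⟫ + μ / 2 * ‖y - x‖ ^ 2)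
    (xstar : EuclideanSpace ℝ (Fin d)) (hxstar : ∀ y, F xstar ≤ F y)
    (σ2 : ℝ) (hσ2 : σ2 = F xstar - (1 / (n : ℝ)) * ∑ i, fstar i)
    (Lmax : ℝ) (hLmax : Lmax = Finset.univ.sup' ⟨⟨0, hn⟩, Finset.mem_univ _⟩ L)
    (γ : ℝ) (hγ0 : 0 < γ) (hγ : γ ≤ 1 / Lmax)
    (x0 : EuclideanSpace ℝ (Fin d))
    (Y : (k : ℕ) → (Fin k → Fin n) → EuclideanSpace ℝ (Fin d))
    (hY0 : ∀ ω, Y 0 ω = x0)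
    (hYstep : ∀ (k : ℕ) (ω : Fin (k + 1) → Fin n),
      Y (k + 1) ω =
        Y k (fun j => ω j.castSucc) -
          γ • G (ω (Fin.last k)) (Y k (fun j => ω j.castSucc))) :
    ∀ k : ℕ, (1 / (n : ℝ) ^ k) * ∑ ω : Fin k → Fin n, ‖Y k ω - xstar‖ ^ 2 ≤
      (1 - μ * γ) ^ k * ‖x0 - xstar‖ ^ 2 + 2 * σ2 / μ := by
  have hn' : (0:ℝ) < n := by exact_mod_cast hn
  have hn0 : (n:ℝ) ≠ 0 := ne_of_gt hn'
  -- σ2 ≥ 0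
  have hfs_le : ∀ i z, fstar i ≤ f i z := fun i z => (hfstar i).1 ⟨z, rfl⟩
  have hσ2pos : 0 ≤ σ2 := by
    rw [hσ2, hF xstar]
    have hsum : ∑ i, fstar i ≤ ∑ i, f i xstar :=
      Finset.sum_le_sum (fun i _ => hfs_le i xstar)
    have : (1/(n:ℝ)) * ∑ i, fstar i ≤ (1/(n:ℝ)) * ∑ i, f i xstar := by
      apply mul_le_mul_of_nonneg_left hsum (by positivity)
    linarith
  -- handle d = 0
  rcases Nat.eq_zero_or_pos d with hd | hd
  · subst hd
    haveI : Subsingleton (EuclideanSpace ℝ (Fin 0)) := by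
      exact ⟨fun a b => by ext i; exact i.elim0⟩
    intro k
    have hz : ∀ ω : Fin k → Fin n, ‖Y k ω - xstar‖ ^ 2 = 0 := by
      intro ω
      rw [Subsingleton.elim (Y k ω - xstar) 0, norm_zero]
      ring
    rw [Finset.sum_congr rfl (fun ω _ => hz ω), Finset.sum_const, smul_zero, mul_zero]
    have : ‖x0 - xstar‖ = 0 := by rw [Subsingleton.elim (x0 - xstar) 0, norm_zero]
    rw [this]
    have h9 : (1 - μ*γ)^k * (0:ℝ)^2 = 0 := by ring
    rw [h9, zero_add]
    positivity
  -- d > 0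
  -- Lmax facts
  have hLi : ∀ i, L i ≤ Lmax := by
    rw [hLmax]; exact fun i => Finset.le_sup' L (Finset.mem_univ i)
  have hLmaxpos : 0 < Lmax := lt_of_lt_of_le (hL ⟨0, hn⟩) (hLi ⟨0, hn⟩)
  have hγL : γ * Lmax ≤ 1 := by
    rw [le_div_iff₀ hLmaxpos] at hγ; linarith
  -- gradient of F
  have hGFeq : ∀ x, GF x = (1 / (n : ℝ)) • ∑ i, G i x := by
    intro x
    refine (hGF x).unique ?_
    have h1 : HasFDerivAt F
        ((InnerProductSpace.toDual ℝ _) ((1 / (n : ℝ)) • ∑ i, G i x)) x := by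
      have hsum : HasFDerivAt (fun y => ∑ i, f i y)
          (∑ i, (InnerProductSpace.toDual ℝ _) (G i x)) x :=
        HasFDerivAt.fun_sum (fun i _ => (hgrad i x).hasFDerivAt)
      have hm := hsum.const_mul (1 / (n : ℝ))
      have heq : F = fun y => (1 / (n : ℝ)) * ∑ i, f i y := funext hF
      rw [heq]
      refine hm.congr_fderiv ?_
      simp [map_smul, map_sum]
    have := h1.hasGradientAt
    rwa [LinearIsometryEquiv.symm_apply_apply] at this
  -- norm of gradient bound
  have hgs : ∀ i x, ‖G i x‖ ^ 2 ≤ 2 * Lmax * (f i x - fstar i) := by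
    intro i x
    have hdesc := sgd_descent (f i) (G i) (hgrad i) (L i) (hsmooth i)
    have h1 := sgd_gradsq (f i) (G i) (L i) (hL i) hdesc (fstar i) (hfs_le i) x
    have h2 : f i x - fstar i ≥ 0 := by linarith [hfs_le i x]
    nlinarith [hLi i, hL i]
  -- key per-point inequality
  have key : ∀ x : EuclideanSpace ℝ (Fin d),
      ∑ i, ‖x - xstar - γ • G i x‖ ^ 2 ≤
        (n:ℝ) * ((1 - μ * γ) * ‖x - xstar‖ ^ 2 + 2 * γ * σ2) := by
    intro x
    set w : EuclideanSpace ℝ (Fin d) := x - xstar with hw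
    have hexp : ∀ i : Fin n, ‖w - γ • G i x‖ ^ 2 =
        ‖w‖ ^ 2 - 2 * γ * ⟪G i x, w⟫ + γ ^ 2 * ‖G i x‖ ^ 2 := by
      intro i
      rw [norm_sub_sq_real, real_inner_smul_right, norm_smul, Real.norm_eq_abs,
        abs_of_pos hγ0, real_inner_comm]
      ring
    rw [Finset.sum_congr rfl (fun i _ => hexp i)]
    -- inner product sum
    have hip : ∑ i, ⟪G i x, w⟫ = (n:ℝ) * ⟪GF x, w⟫ := by
      rw [hGFeq x, inner_smul_left, sum_inner]
      simp only [RCLike.star_def, conj_trivial]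
      field_simp
    -- strong convexity bound
    have hsc1 : ⟪GF x, w⟫ ≥ (F x - F xstar) + μ / 2 * ‖w‖ ^ 2 := by
      have h := hsc x xstar
      have h1 : ⟪GF x, xstar - x⟫ = -⟪GF x, w⟫ := by
        rw [hw, ← inner_neg_right]
        congr 1
        abel
      have h2 : ‖xstar - x‖ = ‖w‖ := by rw [hw, ← norm_neg]; congr 1; abel
      rw [h1, h2] at h
      linarith
    -- gradient norm sum bound
    have hgsum : ∑ i, ‖G i x‖ ^ 2 ≤ 2 * Lmax * (n:ℝ) * ((F x - F xstar) + σ2) := by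
      have h1 : ∑ i, ‖G i x‖ ^ 2 ≤ ∑ i, 2 * Lmax * (f i x - fstar i) :=
        Finset.sum_le_sum (fun i _ => hgs i x)
      have h2 : ∑ i, 2 * Lmax * (f i x - fstar i)
          = 2 * Lmax * ((n:ℝ) * F x - ((n:ℝ) * F xstar - (n:ℝ) * σ2)) := by
        rw [← Finset.mul_sum, Finset.sum_sub_distrib]
        have hfx : ∑ i, f i x = (n:ℝ) * F x := by rw [hF x]; field_simp
        have hfs : ∑ i, fstar i = (n:ℝ) * F xstar - (n:ℝ) * σ2 := by
          rw [hσ2]; field_simp; ring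
        rw [hfx, hfs]
      rw [h2] at h1
      calc ∑ i, ‖G i x‖ ^ 2 ≤ _ := h1
      _ = 2 * Lmax * (n:ℝ) * ((F x - F xstar) + σ2) := by ring
    have hΔ : 0 ≤ F x - F xstar := by linarith [hxstar x]
    rw [Finset.sum_add_distrib, Finset.sum_sub_distrib, Finset.sum_const,
      Finset.card_univ, Fintype.card_fin, ← Finset.mul_sum, ← Finset.mul_sum, hip]
    have hnorm2 : 0 ≤ ‖w‖ ^ 2 := sq_nonneg _
    have e1 : (2 * γ) * ((n:ℝ) * ⟪GF x, w⟫) ≥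
        (2 * γ) * ((n:ℝ) * ((F x - F xstar) + μ / 2 * ‖w‖ ^ 2)) := by
      apply mul_le_mul_of_nonneg_left _ (by positivity)
      apply mul_le_mul_of_nonneg_left hsc1 (le_of_lt hn')
    have e2 : γ ^ 2 * ∑ i, ‖G i x‖ ^ 2 ≤
        γ ^ 2 * (2 * Lmax * (n:ℝ) * ((F x - F xstar) + σ2)) := by
      apply mul_le_mul_of_nonneg_left hgsum (by positivity)
    rw [nsmul_eq_mul]
    nlinarith [mul_nonneg (mul_nonneg hγ0.le hγ0.le) (mul_nonneg hn'.le hΔ),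
      mul_nonneg (mul_nonneg hγ0.le hγ0.le) (mul_nonneg hn'.le hσ2pos),
      mul_le_mul_of_nonneg_left hγL (mul_nonneg (mul_nonneg hγ0.le hn'.le) hΔ),
      mul_le_mul_of_nonneg_left hγL (mul_nonneg (mul_nonneg hγ0.le hn'.le) hσ2pos)]
  -- contraction factor nonneg
  have hcontr : 0 ≤ 1 - μ * γ := by
    by_contra hlt
    push_neg at hlt
    have hc : 0 < μ * γ - 1 := by linarith
    set t : ℝ := Real.sqrt ((2 * γ * σ2 + 1) / (μ * γ - 1)) with ht
    have ht2 : t ^ 2 = (2 * γ * σ2 + 1) / (μ * γ - 1) := by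
      rw [ht, Real.sq_sqrt]
      positivity
    set e : EuclideanSpace ℝ (Fin d) := EuclideanSpace.single ⟨0, hd⟩ (1:ℝ) with he
    set x : EuclideanSpace ℝ (Fin d) := xstar + t • e with hx
    have hnx : ‖x - xstar‖ ^ 2 = t ^ 2 := by
      rw [hx, add_sub_cancel_left, norm_smul, Real.norm_eq_abs, he,
        EuclideanSpace.norm_single, norm_one, mul_one, sq_abs]
    have hk := key x
    have hpos : (0:ℝ) ≤ ∑ i, ‖x - xstar - γ • G i x‖ ^ 2 :=
      Finset.sum_nonneg (fun i _ => sq_nonneg _)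
    have h1 : 0 ≤ (1 - μ * γ) * ‖x - xstar‖ ^ 2 + 2 * γ * σ2 := by
      nlinarith
    rw [hnx, ht2] at h1
    have h2 : (1 - μ * γ) * ((2 * γ * σ2 + 1) / (μ * γ - 1)) = -(2 * γ * σ2 + 1) := by
      field_simp
      ring
    rw [h2] at h1
    linarith
  -- main induction
  intro k
  induction k with
  | zero =>
    have hone : ∑ ω : Fin 0 → Fin n, ‖Y 0 ω - xstar‖ ^ 2 = ‖x0 - xstar‖ ^ 2 := by
      simp [hY0]
    rw [hone, pow_zero, pow_zero]
    have : 0 ≤ 2 * σ2 / μ := by positivity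
    linarith
  | succ k ih =>
    -- reindex the sum
    have hre : ∑ ω : Fin (k+1) → Fin n, ‖Y (k+1) ω - xstar‖ ^ 2
        = ∑ p : Fin n × (Fin k → Fin n), ‖Y k p.2 - xstar - γ • G p.1 (Y k p.2)‖ ^ 2 := by
      rw [← Fintype.sum_equiv (Fin.snocEquiv (fun _ => Fin n))
        (fun p => ‖Y k p.2 - xstar - γ • G p.1 (Y k p.2)‖ ^ 2)
        (fun ω => ‖Y (k+1) ω - xstar‖ ^ 2) ?_]
      intro p
      have hs := hYstep k (Fin.snocEquiv (fun _ => Fin n) p)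
      have h1 : (fun j : Fin k => (Fin.snocEquiv (fun _ => Fin n) p) j.castSucc) = p.2 := by
        funext j
        simp only [Fin.snocEquiv_apply, Fin.snoc_castSucc]
      have h2 : (Fin.snocEquiv (fun _ => Fin n) p) (Fin.last k) = p.1 := by
        simp only [Fin.snocEquiv_apply, Fin.snoc_last]
      rw [hs, h1, h2, sub_right_comm]
    have hstep : ∑ ω : Fin (k+1) → Fin n, ‖Y (k+1) ω - xstar‖ ^ 2 ≤
        (n:ℝ) * ((1 - μ * γ) * ∑ ω : Fin k → Fin n, ‖Y k ω - xstar‖ ^ 2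
          + (n:ℝ)^k * (2 * γ * σ2)) := by
      rw [hre, Fintype.sum_prod_type_right]
      calc ∑ ω : Fin k → Fin n, ∑ i, ‖Y k ω - xstar - γ • G i (Y k ω)‖ ^ 2
          ≤ ∑ ω : Fin k → Fin n,
            (n:ℝ) * ((1 - μ * γ) * ‖Y k ω - xstar‖ ^ 2 + 2 * γ * σ2) :=
            Finset.sum_le_sum (fun ω _ => key (Y k ω))
        _ = (n:ℝ) * ((1 - μ * γ) * ∑ ω : Fin k → Fin n, ‖Y k ω - xstar‖ ^ 2
              + (n:ℝ)^k * (2 * γ * σ2)) := by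
            rw [← Finset.mul_sum, Finset.sum_add_distrib, ← Finset.mul_sum,
              Finset.sum_const, Finset.card_univ]
            have hcard : Fintype.card (Fin k → Fin n) = n ^ k := by
              simp [Fintype.card_fun]
            rw [hcard]
            push_cast
            ring
    have hmul : (1 / (n:ℝ) ^ (k+1)) * ∑ ω : Fin (k+1) → Fin n, ‖Y (k+1) ω - xstar‖ ^ 2 ≤
        (1 - μ * γ) * ((1 / (n:ℝ) ^ k) * ∑ ω : Fin k → Fin n, ‖Y k ω - xstar‖ ^ 2)
          + 2 * γ * σ2 := by
      have h0 : (0:ℝ) ≤ 1 / (n:ℝ)^(k+1) := by positivity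
      have := mul_le_mul_of_nonneg_left hstep h0
      calc (1 / (n:ℝ) ^ (k+1)) * ∑ ω : Fin (k+1) → Fin n, ‖Y (k+1) ω - xstar‖ ^ 2
          ≤ (1 / (n:ℝ)^(k+1)) * ((n:ℝ) * ((1 - μ * γ) *
            ∑ ω : Fin k → Fin n, ‖Y k ω - xstar‖ ^ 2 + (n:ℝ)^k * (2 * γ * σ2))) := this
        _ = (1 - μ * γ) * ((1 / (n:ℝ) ^ k) * ∑ ω : Fin k → Fin n, ‖Y k ω - xstar‖ ^ 2)
            + 2 * γ * σ2 := by
            field_simp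
            ring
    have hih := mul_le_mul_of_nonneg_left ih hcontr
    have hfin : (1 - μ * γ) * ((1 - μ * γ) ^ k * ‖x0 - xstar‖ ^ 2 + 2 * σ2 / μ)
        + 2 * γ * σ2 = (1 - μ * γ) ^ (k+1) * ‖x0 - xstar‖ ^ 2 + 2 * σ2 / μ := by
      field_simp
      ring
    calc (1 / (n:ℝ) ^ (k+1)) * ∑ ω : Fin (k+1) → Fin n, ‖Y (k+1) ω - xstar‖ ^ 2
        ≤ (1 - μ * γ) * ((1 / (n:ℝ) ^ k) * ∑ ω : Fin k → Fin n, ‖Y k ω - xstar‖ ^ 2)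
          + 2 * γ * σ2 := hmul
      _ ≤ (1 - μ * γ) * ((1 - μ * γ) ^ k * ‖x0 - xstar‖ ^ 2 + 2 * σ2 / μ)
          + 2 * γ * σ2 := by linarith
      _ = (1 - μ * γ) ^ (k+1) * ‖x0 - xstar‖ ^ 2 + 2 * σ2 / μ := hfin
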